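/- arXiv:1404.1507 — 2 statements merged into one kernel-verified Lean document; each statement's English description precedes it below -/
import Mathlib

section
/- Let a ∈ [-1,1] and let p̄ = 1/2·(1 - sin(π·a/4)). Suppose p is a real number with |p - p̄| ≤ ν/4 for some ν with 0 < ν small enough that |1 - 2p| ≤ 3/4. Then |a - (4/π)·arcsin(1 - 2p)| ≤ ν. -/
open Real

lemma arcsin_lip {x y : ℝ} (hx : x ∈ Set.Icc (-(3/4) : ℝ) (3/4))
    (hy : y ∈ Set.Icc (-(3/4) : ℝ) (3/4)) :
    |Real.arcsin y - Real.arcsin x| ≤ (4 / Real.sqrt 7) * |y - x| := by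
  have hs : Convex ℝ (Set.Icc (-(3/4) : ℝ) (3/4)) := convex_Icc _ _
  have key := hs.norm_image_sub_le_of_norm_hasDerivWithin_le
    (f := Real.arcsin) (f' := fun z => 1 / Real.sqrt (1 - z ^ 2))
    (C := 4 / Real.sqrt 7) ?_ ?_ hx hy
  · simpa [Real.norm_eq_abs] using key
  · intro z hz
    have hz1 : z ≠ -1 := by simp only [Set.mem_Icc] at hz; nlinarith [hz.1, hz.2]
    have hz2 : z ≠ 1 := by simp only [Set.mem_Icc] at hz; nlinarith [hz.1, hz.2]
    exact (Real.hasDerivAt_arcsin hz1 hz2).hasDerivWithinAt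
  · intro z hz
    simp only [Set.mem_Icc] at hz
    have h7 : (0:ℝ) < Real.sqrt 7 := Real.sqrt_pos.mpr (by norm_num)
    have hle : Real.sqrt 7 / 4 ≤ Real.sqrt (1 - z ^ 2) := by
      rw [show Real.sqrt 7 / 4 = Real.sqrt (7/16) by
        rw [show (7:ℝ)/16 = 7 / 4^2 by norm_num, Real.sqrt_div' , Real.sqrt_sq] <;> norm_num]
      exact Real.sqrt_le_sqrt (by nlinarith [hz.1, hz.2])
    have hpos : (0:ℝ) < Real.sqrt (1 - z ^ 2) := lt_of_lt_of_le (by positivity) hle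
    rw [Real.norm_eq_abs, abs_of_pos (by positivity)]
    rw [div_le_div_iff₀ hpos h7]
    nlinarith

/-- If `p` is within `ν/4` of `p̄ = 1/2 (1 - sin (πa/4))` and `|1-2p| ≤ 3/4`,
then `(4/π) arcsin (1-2p)` estimates `a` within `ν`. -/
theorem stmt_6 (a ν p : ℝ) (ha : a ∈ Set.Icc (-1 : ℝ) 1) (hν : 0 < ν)
    (hp : |p - 1/2 * (1 - Real.sin (Real.pi * a / 4))| ≤ ν / 4)
    (hsmall : |1 - 2 * p| ≤ 3/4) :
    |a - (4 / Real.pi) * Real.arcsin (1 - 2 * p)| ≤ ν := by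
  obtain ⟨ha1, ha2⟩ := ha
  have hpi := Real.pi_gt_d6
  set s := Real.sin (Real.pi * a / 4) with hs
  -- a = (4/π) arcsin s
  have hmem : Real.pi * a / 4 ∈ Set.Icc (-(Real.pi/2)) (Real.pi/2) := by
    constructor <;> nlinarith
  have key : Real.arcsin s = Real.pi * a / 4 := Real.arcsin_sin hmem.1 hmem.2
  have ha_eq : a = (4 / Real.pi) * Real.arcsin s := by
    rw [key]; field_simp
  -- |s| ≤ 3/4
  have hsb : |s| ≤ 3/4 := by
    have h1 : s ≤ Real.sin (Real.pi/4) := by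
      apply Real.sin_le_sin_of_le_of_le_pi_div_two (by nlinarith) (by nlinarith) (by nlinarith)
    have h2 : Real.sin (-(Real.pi/4)) ≤ s := by
      apply Real.sin_le_sin_of_le_of_le_pi_div_two (by nlinarith) (by nlinarith) (by nlinarith)
    rw [Real.sin_neg] at h2
    have : Real.sin (Real.pi/4) ≤ 3/4 := by
      rw [Real.sin_pi_div_four]
      nlinarith [Real.sq_sqrt (by norm_num : (2:ℝ) ≥ 0), Real.sqrt_nonneg 2]
    rw [abs_le]; constructor <;> linarith
  -- distance between s and 1-2p
  have hdist : |(1 - 2*p) - s| ≤ ν / 2 := by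
    have : (1 - 2*p) - s = -2 * (p - 1/2 * (1 - s)) := by ring
    rw [this, abs_mul]
    calc |(-2:ℝ)| * |p - 1/2 * (1 - s)| ≤ 2 * (ν/4) := by
          rw [abs_of_nonpos (by norm_num : (-2:ℝ) ≤ 0)]
          nlinarith [abs_nonneg (p - 1/2 * (1 - s))]
      _ = ν / 2 := by ring
  have hlip := arcsin_lip (x := s) (y := 1 - 2*p)
    (by rw [abs_le] at hsb; exact ⟨by linarith [hsb.1], hsb.2⟩)
    (by rw [abs_le] at hsmall; exact ⟨by linarith [hsmall.1], hsmall.2⟩)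
  have h7 : Real.sqrt 7 ≥ 13/5 := by
    nlinarith [Real.sq_sqrt (by norm_num : (7:ℝ) ≥ 0), Real.sqrt_nonneg 7]
  have habs : |a - (4 / Real.pi) * Real.arcsin (1 - 2 * p)| =
      (4 / Real.pi) * |Real.arcsin (1 - 2*p) - Real.arcsin s| := by
    rw [ha_eq, ← mul_sub, abs_mul, abs_sub_comm, abs_of_pos (by positivity)]
  rw [habs]
  have step : |Real.arcsin (1 - 2*p) - Real.arcsin s| ≤ (4 / Real.sqrt 7) * (ν/2) := by
    calc _ ≤ (4 / Real.sqrt 7) * |(1 - 2*p) - s| := hlip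
      _ ≤ (4 / Real.sqrt 7) * (ν/2) := by
          apply mul_le_mul_of_nonneg_left hdist (by positivity)
  calc (4 / Real.pi) * |Real.arcsin (1 - 2*p) - Real.arcsin s|
      ≤ (4 / Real.pi) * ((4 / Real.sqrt 7) * (ν/2)) := by
        apply mul_le_mul_of_nonneg_left step (by positivity)
    _ ≤ ν := by
        have h7pos : (0:ℝ) < Real.sqrt 7 := by linarith
        have hπ := Real.pi_pos
        have key2 : 4/Real.pi * (4/Real.sqrt 7 * (ν/2)) = 8*ν/(Real.pi*Real.sqrt 7) := by
          field_simp; ring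
        rw [key2, div_le_iff₀ (by positivity)]
        have h8 : (8:ℝ) ≤ Real.pi * Real.sqrt 7 := by nlinarith
        nlinarith [mul_le_mul_of_nonneg_left h8 hν.le]
end

section
/- Let |$⟩ = |α₁⟩⊗…⊗|α_n⟩ be a product of single-qubit pure states with Bloch coefficients ⟨A^i_j⟩ (j ∈ {x,y,z}). Suppose estimates ⟨Ã^i_j⟩ satisfy |⟨Ã^i_j⟩ - ⟨A^i_j⟩| ≤ ν for all i, j. Define ρ'_i = I/2 + ∑_j ⟨Ã^i_j⟩σ_j, let ρ_i be a closest density matrix to ρ'_i in trace distance, and ρ = ρ₁⊗…⊗ρ_n. Then ⟨$|ρ|$⟩ ≥ 1 - 6nν. -/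
open scoped ComplexOrder

/-- Trace norm (Schatten 1-norm) of a complex square matrix. -/
noncomputable def traceNorm {ι : Type*} [Fintype ι] [DecidableEq ι]
    (M : Matrix ι ι ℂ) : ℝ :=
  (((Matrix.posSemidef_self_mul_conjTranspose M).1.eigenvectorUnitary.1 *
    Matrix.diagonal (fun i => ((√((Matrix.posSemidef_self_mul_conjTranspose M).1.eigenvalues i) : ℝ) : ℂ)) *
    (star (Matrix.posSemidef_self_mul_conjTranspose M).1.eigenvectorUnitary :
      Matrix ι ι ℂ)).trace).re

/-- Trace distance `D(A,B) = ‖A-B‖₁ / 2`. -/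
noncomputable def traceDist {ι : Type*} [Fintype ι] [DecidableEq ι]
    (A B : Matrix ι ι ℂ) : ℝ :=
  traceNorm (A - B) / 2

/-- A density matrix: positive semidefinite with unit trace. -/
def IsDensityMatrix {ι : Type*} [Fintype ι] (ρ : Matrix ι ι ℂ) : Prop :=
  ρ.PosSemidef ∧ ρ.trace = 1

/-- Fidelity of a state `ρ` with the pure state `ψ`: `⟨ψ|ρ|ψ⟩`. -/
noncomputable def pureFid {ι : Type*} [Fintype ι] (ρ : Matrix ι ι ℂ) (ψ : ι → ℂ) : ℝ :=
  (dotProduct (star ψ) (ρ.mulVec ψ)).re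

/-- The Pauli matrices σ_x, σ_y, σ_z. -/
noncomputable def pauli : Fin 3 → Matrix (Fin 2) (Fin 2) ℂ :=
  ![!![0, 1; 1, 0], !![0, -Complex.I; Complex.I, 0], !![1, 0; 0, -1]]

lemma traceNorm_formula (M : Matrix (Fin 2) (Fin 2) ℂ) (hH : M.IsHermitian)
    (ht : M.trace = 0) :
    traceNorm M = 2 * Real.sqrt ((M 0 0).re ^ 2 + Complex.normSq (M 0 1)) := by
  set c : ℝ := (M 0 0).re with hc
  set w : ℂ := M 0 1 with hw
  have h00 : M 0 0 = (c : ℂ) := (hH.coe_re_apply_self 0).symm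
  have h11 : M 1 1 = -(c : ℂ) := by
    have := ht
    rw [Matrix.trace_fin_two, h00] at this
    linear_combination this
  have h10 : M 1 0 = starRingEnd ℂ w := by
    have h := hH.apply 0 1
    rw [hw, ← h]
    simp
  set r : ℝ := Real.sqrt (c ^ 2 + Complex.normSq w) with hrdef
  have hnn : (0:ℝ) ≤ c ^ 2 + Complex.normSq w := by exact add_nonneg (sq_nonneg c) (Complex.normSq_nonneg w)
  have hr2 : r ^ 2 = c ^ 2 + Complex.normSq w := Real.sq_sqrt hnn
  have hr0 : 0 ≤ r := Real.sqrt_nonneg _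
  have hMH : M.conjTranspose = M := hH
  have key : M * M.conjTranspose = ((c ^ 2 + Complex.normSq w : ℝ) : ℂ) • 1 := by
    rw [hMH]
    ext i j
    fin_cases i <;> fin_cases j <;>
      simp [Matrix.mul_apply, Fin.sum_univ_two, h00, h11, h10, Matrix.one_apply,
        Complex.normSq_apply, Complex.ext_iff, ← Complex.ofReal_pow] <;> ring_nf <;> simp [← hw] <;> ring
  have hE : ∀ i, (Matrix.posSemidef_self_mul_conjTranspose M).1.eigenvalues i = r ^ 2 := by
    have hc := (Matrix.posSemidef_self_mul_conjTranspose M).1.conjStarAlgAut_star_eigenvectorUnitary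
    have h2 := (congrArg (Unitary.conjStarAlgAut ℂ _
      (star (Matrix.posSemidef_self_mul_conjTranspose M).1.eigenvectorUnitary)) key).symm.trans hc
    simp at h2
    intro i
    have h3 := congrFun (congrFun h2 i) i
    simp at h3
    rw [hr2]
    exact_mod_cast h3.symm
  rw [traceNorm, Matrix.trace_mul_cycle, Unitary.coe_star_mul_self, one_mul, Matrix.trace_diagonal]
  simp [hE, Real.sqrt_sq hr0, Fin.sum_univ_two]

noncomputable def bvec (X : Matrix (Fin 2) (Fin 2) ℂ) : EuclideanSpace ℝ (Fin 3) :=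
  WithLp.toLp 2 ![(X 0 0).re, (X 0 1).re, (X 0 1).im]


lemma traceDist_eq_bvec (X Y : Matrix (Fin 2) (Fin 2) ℂ) (hX : X.IsHermitian)
    (hY : Y.IsHermitian) (htr : X.trace = Y.trace) :
    traceDist X Y = ‖bvec X - bvec Y‖ := by
  have hH : (X - Y).IsHermitian := hX.sub hY
  have ht : (X - Y).trace = 0 := by rw [Matrix.trace_sub, htr, sub_self]
  rw [traceDist, traceNorm_formula _ hH ht]
  rw [EuclideanSpace.norm_eq]
  rw [show ((X - Y) 0 0) = X 0 0 - Y 0 0 from rfl, show ((X - Y) 0 1) = X 0 1 - Y 0 1 from rfl]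
  rw [Fin.sum_univ_three]
  simp only [bvec]
  norm_num [Complex.normSq_apply, Complex.sub_re, Complex.sub_im, Real.norm_eq_abs, sq_abs,
    Matrix.cons_val_two, Matrix.tail_cons, Matrix.head_cons]
  ring_nf

lemma weier {ι : Type*} [DecidableEq ι] (s : Finset ι) (x : ι → ℝ)
    (h0 : ∀ i ∈ s, 0 ≤ x i) (h1 : ∀ i ∈ s, x i ≤ 1) :
    1 - ∑ i ∈ s, (1 - x i) ≤ ∏ i ∈ s, x i := by
  induction s using Finset.induction_on with
  | empty => simp
  | @insert a s ha ih =>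
    rw [Finset.sum_insert ha, Finset.prod_insert ha]
    have hxa0 := h0 a (Finset.mem_insert_self a s)
    have hxa1 := h1 a (Finset.mem_insert_self a s)
    have ihs := ih (fun i hi => h0 i (Finset.mem_insert_of_mem hi))
      (fun i hi => h1 i (Finset.mem_insert_of_mem hi))
    have hS : 0 ≤ ∑ i ∈ s, (1 - x i) :=
      Finset.sum_nonneg fun i hi => by linarith [h1 i (Finset.mem_insert_of_mem hi)]
    have hmul := mul_le_mul_of_nonneg_left ihs hxa0
    have hmul2 : 0 ≤ (1 - x a) * ∑ i ∈ s, (1 - x i) :=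
      mul_nonneg (by linarith) hS
    nlinarith [hmul, hmul2]


lemma prod_fid (n : ℕ) (α : Fin n → Fin 2 → ℂ) (ρ : Fin n → Matrix (Fin 2) (Fin 2) ℂ) :
    dotProduct (star (fun f : Fin n → Fin 2 => ∏ i, α i (f i)))
      ((Matrix.of fun f g : Fin n → Fin 2 => ∏ i, ρ i (f i) (g i)).mulVec
        (fun f : Fin n → Fin 2 => ∏ i, α i (f i)))
    = ∏ i, dotProduct (star (α i)) ((ρ i).mulVec (α i)) := by
  have h1 : dotProduct (star (fun f : Fin n → Fin 2 => ∏ i, α i (f i)))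
      ((Matrix.of fun f g : Fin n → Fin 2 => ∏ i, ρ i (f i) (g i)).mulVec
        (fun f : Fin n → Fin 2 => ∏ i, α i (f i)))
      = ∑ f : Fin n → Fin 2, ∑ g : Fin n → Fin 2,
          ∏ i, (star (α i (f i)) * (ρ i (f i) (g i) * α i (g i))) := by
    rw [dotProduct]
    refine Finset.sum_congr rfl fun f _ => ?_
    rw [Matrix.mulVec, dotProduct, Finset.mul_sum]
    refine Finset.sum_congr rfl fun g _ => ?_
    simp only [Pi.star_apply, Matrix.of_apply, star_prod]
    rw [← Finset.prod_mul_distrib, ← Finset.prod_mul_distrib]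
  have h2 : ∀ i, dotProduct (star (α i)) ((ρ i).mulVec (α i))
      = ∑ p : Fin 2 × Fin 2, star (α i p.1) * (ρ i p.1 p.2 * α i p.2) := by
    intro i
    rw [Fintype.sum_prod_type, dotProduct]
    refine Finset.sum_congr rfl fun a _ => ?_
    rw [Matrix.mulVec, dotProduct, Finset.mul_sum]
    rfl
  have h3 : (∏ i, dotProduct (star (α i)) ((ρ i).mulVec (α i)))
      = ∑ h : Fin n → Fin 2 × Fin 2,
          ∏ i, (star (α i (h i).1) * (ρ i (h i).1 (h i).2 * α i (h i).2)) := by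
    simp_rw [h2]
    exact Finset.prod_univ_sum _ _
  have h4 : (∑ h : Fin n → Fin 2 × Fin 2,
        ∏ i, (star (α i (h i).1) * (ρ i (h i).1 (h i).2 * α i (h i).2)))
      = ∑ p : (Fin n → Fin 2) × (Fin n → Fin 2),
          ∏ i, (star (α i (p.1 i)) * (ρ i (p.1 i) (p.2 i) * α i (p.2 i))) :=
    Fintype.sum_equiv (Equiv.arrowProdEquivProdArrow (Fin n) (fun _ => Fin 2) (fun _ => Fin 2))
      _ _ (fun h => by simp [Equiv.arrowProdEquivProdArrow])
  rw [h1, h3, h4, Fintype.sum_prod_type]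


set_option maxHeartbeats 1000000 in
private lemma qubit_bound (ν : ℝ) (hν : 0 ≤ ν) (α : Fin 2 → ℂ)
    (hα : dotProduct (star α) α = 1)
    (A At : Fin 3 → ℝ)
    (hBloch : Matrix.vecMulVec α (star α) =
      (1/2 : ℂ) • (1 : Matrix (Fin 2) (Fin 2) ℂ) + ∑ j, (A j : ℂ) • pauli j)
    (hest : ∀ j, |At j - A j| ≤ ν)
    (ρ' ρ : Matrix (Fin 2) (Fin 2) ℂ)
    (hρ' : ρ' = (1/2 : ℂ) • (1 : Matrix (Fin 2) (Fin 2) ℂ) + ∑ j, (At j : ℂ) • pauli j)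
    (hρ : IsDensityMatrix ρ)
    (hmin : ∀ τ, IsDensityMatrix τ → traceDist ρ ρ' ≤ traceDist τ ρ') :
    1 - 6 * ν ≤ (dotProduct (star α) (ρ.mulVec α)).re ∧
      (dotProduct (star α) (ρ.mulVec α)).re ≤ 1 := by
  set P : Matrix (Fin 2) (Fin 2) ℂ := Matrix.vecMulVec α (star α) with hPdef
  -- entries of P in Bloch form
  have hP00 : P 0 0 = (1/2 : ℂ) + (A 2 : ℂ) := by
    rw [hBloch]; simp [pauli, Fin.sum_univ_three, Matrix.one_apply]
  have hP01 : P 0 1 = (A 0 : ℂ) - (A 1 : ℂ) * Complex.I := by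
    rw [hBloch]; simp [pauli, Fin.sum_univ_three, Matrix.one_apply]; try ring
  have hP10 : P 1 0 = (A 0 : ℂ) + (A 1 : ℂ) * Complex.I := by
    rw [hBloch]; simp [pauli, Fin.sum_univ_three, Matrix.one_apply]; try ring
  have hP11 : P 1 1 = (1/2 : ℂ) - (A 2 : ℂ) := by
    rw [hBloch]; simp [pauli, Fin.sum_univ_three, Matrix.one_apply]; try ring
  -- purity
  have hdetP : P 0 0 * P 1 1 = P 0 1 * P 1 0 := by
    simp [hPdef, Matrix.vecMulVec_apply]; ring
  have hpure : A 0 ^ 2 + A 1 ^ 2 + A 2 ^ 2 = 1 / 4 := by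
    rw [hP00, hP11, hP01, hP10] at hdetP
    have hre := congrArg Complex.re hdetP
    simp at hre
    ring_nf at hre ⊢
    linarith [hre]
  -- P is a density matrix
  have hPherm : P.IsHermitian := by
    unfold Matrix.IsHermitian
    ext i j
    simp [hPdef, Matrix.conjTranspose_apply, Matrix.vecMulVec_apply, mul_comm]
  have hPtr : P.trace = 1 := by
    rw [Matrix.trace_fin_two, hP00, hP11]; ring
  have hPpsd : P.PosSemidef := by
    refine Matrix.PosSemidef.of_dotProduct_mulVec_nonneg hPherm fun x => ?_
    have : dotProduct (star x) (P.mulVec x) =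
        star (star (α 0) * x 0 + star (α 1) * x 1) * (star (α 0) * x 0 + star (α 1) * x 1) := by
      simp [hPdef, dotProduct, Matrix.mulVec, Matrix.vecMulVec_apply,
        Fin.sum_univ_two, star_mul']
      ring
    rw [this]
    exact star_mul_self_nonneg _
  have hPdm : IsDensityMatrix P := ⟨hPpsd, hPtr⟩
  -- entries of ρ'
  have hρ'00 : ρ' 0 0 = (1/2 : ℂ) + (At 2 : ℂ) := by
    rw [hρ']; simp [pauli, Fin.sum_univ_three, Matrix.one_apply]
  have hρ'01 : ρ' 0 1 = (At 0 : ℂ) - (At 1 : ℂ) * Complex.I := by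
    rw [hρ']; simp [pauli, Fin.sum_univ_three, Matrix.one_apply]; try ring
  have hρ'10 : ρ' 1 0 = (At 0 : ℂ) + (At 1 : ℂ) * Complex.I := by
    rw [hρ']; simp [pauli, Fin.sum_univ_three, Matrix.one_apply]; try ring
  have hρ'11 : ρ' 1 1 = (1/2 : ℂ) - (At 2 : ℂ) := by
    rw [hρ']; simp [pauli, Fin.sum_univ_three, Matrix.one_apply]; try ring
  have hρ'herm : ρ'.IsHermitian := by
    unfold Matrix.IsHermitian
    ext i j
    fin_cases i <;> fin_cases j <;>
      simp [Matrix.conjTranspose_apply, hρ'00, hρ'01, hρ'10, hρ'11, Complex.ext_iff]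
  have hρ'tr : ρ'.trace = 1 := by
    rw [Matrix.trace_fin_two, hρ'00, hρ'11]; ring
  -- ρ facts
  have hρherm : ρ.IsHermitian := hρ.1.1
  have hρtr : ρ.trace = 1 := hρ.2
  set g : ℝ := (ρ 0 0).re with hg
  set u : ℝ := (ρ 0 1).re with hu
  set v : ℝ := (ρ 0 1).im with hv
  have hρ00 : ρ 0 0 = (g : ℂ) := (hρherm.coe_re_apply_self 0).symm
  have hρ11 : ρ 1 1 = (1 : ℂ) - (g : ℂ) := by
    have := hρtr; rw [Matrix.trace_fin_two, hρ00] at this; linear_combination this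
  have hρ01 : ρ 0 1 = (u : ℂ) + (v : ℂ) * Complex.I := (Complex.re_add_im _).symm
  have hρ10 : ρ 1 0 = (u : ℂ) - (v : ℂ) * Complex.I := by
    have h := hρherm.apply 0 1
    have h2 : ρ 1 0 = star (ρ 0 1) := by rw [← h, star_star]
    rw [h2, hρ01]
    simp [Complex.ext_iff]
  -- PSD consequences
  have hg0 : 0 ≤ g := by
    have h := hρ.1.dotProduct_mulVec_nonneg ![1, 0]
    have : dotProduct (star ![(1:ℂ), 0]) (ρ.mulVec ![1, 0]) = ρ 0 0 := by
      simp [dotProduct, Matrix.mulVec, Fin.sum_univ_two]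
    rw [this, hρ00] at h
    exact_mod_cast (Complex.le_def.mp h).1
  have hg1 : g ≤ 1 := by
    have h := hρ.1.dotProduct_mulVec_nonneg ![0, 1]
    have : dotProduct (star ![(0:ℂ), 1]) (ρ.mulVec ![0, 1]) = ρ 1 1 := by
      simp [dotProduct, Matrix.mulVec, Fin.sum_univ_two]
    rw [this, hρ11] at h
    have := (Complex.le_def.mp h).1
    simp at this
    linarith
  have hdet : u ^ 2 + v ^ 2 ≤ g * (1 - g) := by
    have hdet1 : ρ.det = ((∏ i, hρherm.eigenvalues i : ℝ) : ℂ) := by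
      rw [hρherm.det_eq_prod_eigenvalues]; push_cast; rfl
    have hprod : 0 ≤ (∏ i, hρherm.eigenvalues i : ℝ) :=
      Finset.prod_nonneg fun i _ => hρ.1.eigenvalues_nonneg i
    have hdet2 : ρ.det = ρ 0 0 * ρ 1 1 - ρ 0 1 * ρ 1 0 := Matrix.det_fin_two ρ
    have : (0:ℝ) ≤ (ρ 0 0 * ρ 1 1 - ρ 0 1 * ρ 1 0).re := by
      rw [← hdet2, hdet1]; simpa using hprod
    rw [hρ00, hρ11, hρ01, hρ10] at this
    simp [Complex.ext_iff] at this
    nlinarith [this]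
  -- distance bounds
  have hD1 : traceDist P ρ' ≤ 2 * ν := by
    rw [traceDist, traceNorm_formula _ (hPherm.sub hρ'herm)
      (by rw [Matrix.trace_sub, hPtr, hρ'tr, sub_self])]
    have e00 : ((P - ρ') 0 0).re = A 2 - At 2 := by
      simp [Matrix.sub_apply, hP00, hρ'00]
    have e01n : Complex.normSq ((P - ρ') 0 1) = (A 0 - At 0)^2 + (At 1 - A 1)^2 := by
      have : (P - ρ') 0 1 = ((A 0 - At 0 : ℝ) : ℂ) + ((At 1 - A 1 : ℝ) : ℂ) * Complex.I := by
        simp [Matrix.sub_apply, hP01, hρ'01]; push_cast; ring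
      rw [this]
      simp [Complex.normSq_apply]
      ring
    rw [e00, e01n]
    have h2 : Real.sqrt ((A 2 - At 2)^2 + ((A 0 - At 0)^2 + (At 1 - A 1)^2)) ≤ 2 * ν := by
      have hb : (A 2 - At 2)^2 + ((A 0 - At 0)^2 + (At 1 - A 1)^2) ≤ (2*ν)^2 := by
        have h0 := hest 0; have h1 := hest 1; have h2 := hest 2
        rw [abs_le] at h0 h1 h2
        nlinarith [sq_nonneg ν]
      calc Real.sqrt _ ≤ Real.sqrt ((2*ν)^2) := Real.sqrt_le_sqrt hb
        _ = 2*ν := Real.sqrt_sq (by positivity)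
    linarith
  have hD2 : traceDist ρ ρ' ≤ 2 * ν := le_trans (hmin P hPdm) hD1
  have hD3 : traceDist P ρ ≤ 4 * ν := by
    have t1 : traceDist P ρ = ‖bvec P - bvec ρ‖ :=
      traceDist_eq_bvec _ _ hPherm hρherm (by rw [hPtr, hρtr])
    have t2 : traceDist P ρ' = ‖bvec P - bvec ρ'‖ :=
      traceDist_eq_bvec _ _ hPherm hρ'herm (by rw [hPtr, hρ'tr])
    have t3 : traceDist ρ ρ' = ‖bvec ρ - bvec ρ'‖ :=
      traceDist_eq_bvec _ _ hρherm hρ'herm (by rw [hρtr, hρ'tr])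
    have tri : ‖bvec P - bvec ρ‖ ≤ ‖bvec P - bvec ρ'‖ + ‖bvec ρ - bvec ρ'‖ := by
      have := norm_sub_le_norm_sub_add_norm_sub (bvec P) (bvec ρ') (bvec ρ)
      calc ‖bvec P - bvec ρ‖ ≤ ‖bvec P - bvec ρ'‖ + ‖bvec ρ' - bvec ρ‖ :=
            norm_sub_le_norm_sub_add_norm_sub _ _ _
        _ = ‖bvec P - bvec ρ'‖ + ‖bvec ρ - bvec ρ'‖ := by rw [norm_sub_rev (bvec ρ') (bvec ρ)]
    rw [t1]
    rw [t2] at hD1; rw [t3] at hD2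
    linarith
  -- fidelity in coordinates
  have hF : dotProduct (star α) (ρ.mulVec α) =
      ρ 0 0 * P 0 0 + ρ 0 1 * P 1 0 + ρ 1 0 * P 0 1 + ρ 1 1 * P 1 1 := by
    simp [hPdef, dotProduct, Matrix.mulVec, Matrix.vecMulVec_apply, Fin.sum_univ_two]
    ring
  have hFval : (dotProduct (star α) (ρ.mulVec α)).re =
      1/2 + (2*g - 1) * A 2 + 2*u*A 0 - 2*v*A 1 := by
    rw [hF, hρ00, hρ01, hρ10, hρ11, hP00, hP01, hP10, hP11]
    simp [Complex.ext_iff]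
    ring
  set F : ℝ := (dotProduct (star α) (ρ.mulVec α)).re with hFdef
  -- trace distance P ρ in coordinates
  have hDval : traceDist P ρ = Real.sqrt ((1/2 + A 2 - g)^2 + ((A 0 - u)^2 + (-(A 1) - v)^2)) := by
    rw [traceDist, traceNorm_formula _ (hPherm.sub hρherm)
      (by rw [Matrix.trace_sub, hPtr, hρtr, sub_self])]
    have e00 : ((P - ρ) 0 0).re = 1/2 + A 2 - g := by
      simp [Matrix.sub_apply, hP00, hρ00]
    have e01 : Complex.normSq ((P - ρ) 0 1) = (A 0 - u)^2 + (-(A 1) - v)^2 := by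
      have : (P - ρ) 0 1 = ((A 0 - u : ℝ) : ℂ) + ((-(A 1) - v : ℝ) : ℂ) * Complex.I := by
        simp [Matrix.sub_apply, hP01, hρ01]; push_cast; ring
      rw [this]
      simp [Complex.normSq_apply]
      ring
    rw [e00, e01]
    ring
  -- 1 - F ≤ D(P, ρ)
  have hkey : 1 - F ≤ traceDist P ρ := by
    rw [hDval]
    set cc : ℝ := 1/2 + A 2 - g
    set xx : ℝ := A 0 - u
    set yy : ℝ := -(A 1) - v
    have hL : 1 - F = 2*(A 2)*cc + 2*(A 0)*xx + (-(2*(A 1)))*yy := by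
      rw [hFval]; simp only [cc, xx, yy]; linear_combination (-2:ℝ) * hpure
    apply Real.le_sqrt_of_sq_le
    rw [hL]
    nlinarith [sq_nonneg (2*(A 2)*xx - 2*(A 0)*cc), sq_nonneg (2*(A 2)*yy + 2*(A 1)*cc),
      sq_nonneg (2*(A 0)*yy + 2*(A 1)*xx), hpure, sq_nonneg cc, sq_nonneg xx, sq_nonneg yy]
  constructor
  · have : 1 - F ≤ 4 * ν := le_trans hkey hD3
    linarith
  · -- F ≤ 1
    rw [hFval]
    nlinarith [hdet, hpure, hg0, hg1, sq_nonneg (A 0 * v + A 1 * u),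
      sq_nonneg ((1/2 - A 2)*g - (1/2 + A 2)*(1-g)),
      mul_nonneg (mul_nonneg hg0 (by linarith : (0:ℝ) ≤ 1 - g)) (sq_nonneg (A 0 + A 1)),
      sq_nonneg (u*(A 0) - v*(A 1))]

/-- Main tomography fidelity bound: reconstructing each qubit from Pauli
expectation estimates accurate to `ν` and projecting to the closest density
matrix yields a product state `ρ` with `⟨$|ρ|$⟩ ≥ 1 - 6nν`. -/
theorem stmt_14 (n : ℕ) (ν : ℝ) (hν : 0 ≤ ν)
    (α : Fin n → Fin 2 → ℂ)
    (hα : ∀ i, dotProduct (star (α i)) (α i) = 1)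
    (A At : Fin n → Fin 3 → ℝ)
    (hBloch : ∀ i, Matrix.vecMulVec (α i) (star (α i)) =
      (1/2 : ℂ) • (1 : Matrix (Fin 2) (Fin 2) ℂ) + ∑ j, (A i j : ℂ) • pauli j)
    (hest : ∀ i j, |At i j - A i j| ≤ ν)
    (ρ' ρ : Fin n → Matrix (Fin 2) (Fin 2) ℂ)
    (hρ' : ∀ i, ρ' i =
      (1/2 : ℂ) • (1 : Matrix (Fin 2) (Fin 2) ℂ) + ∑ j, (At i j : ℂ) • pauli j)
    (hρ : ∀ i, IsDensityMatrix (ρ i))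
    (hmin : ∀ i, ∀ τ, IsDensityMatrix τ → traceDist (ρ i) (ρ' i) ≤ traceDist τ (ρ' i)) :
    1 - 6 * n * ν ≤
      pureFid (Matrix.of fun f g : Fin n → Fin 2 => ∏ i, ρ i (f i) (g i))
        (fun f : Fin n → Fin 2 => ∏ i, α i (f i)) := by
  have hQ : ∀ i, 1 - 6 * ν ≤ (dotProduct (star (α i)) ((ρ i).mulVec (α i))).re ∧
      (dotProduct (star (α i)) ((ρ i).mulVec (α i))).re ≤ 1 := fun i =>
    qubit_bound ν hν (α i) (hα i) (A i) (At i) (hBloch i) (hest i) (ρ' i) (ρ i)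
      (hρ' i) (hρ i) (fun τ hτ => hmin i τ hτ)
  have hz0 : ∀ i, (0:ℂ) ≤ dotProduct (star (α i)) ((ρ i).mulVec (α i)) := fun i =>
    (hρ i).1.dotProduct_mulVec_nonneg (α i)
  have him : ∀ i, dotProduct (star (α i)) ((ρ i).mulVec (α i)) =
      (((dotProduct (star (α i)) ((ρ i).mulVec (α i))).re : ℝ) : ℂ) := by
    intro i
    have h := (Complex.le_def.mp (hz0 i)).2
    apply Complex.ext
    · simp
    · rw [← h, Complex.ofReal_im, Complex.zero_im]
  have hre0 : ∀ i, 0 ≤ (dotProduct (star (α i)) ((ρ i).mulVec (α i))).re := fun i =>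
    by simpa using (Complex.le_def.mp (hz0 i)).1
  unfold pureFid
  rw [prod_fid]
  have hprodeq : (∏ i, dotProduct (star (α i)) ((ρ i).mulVec (α i)))
      = ((∏ i, (dotProduct (star (α i)) ((ρ i).mulVec (α i))).re : ℝ) : ℂ) := by
    rw [Complex.ofReal_prod]
    exact Finset.prod_congr rfl fun i _ => him i
  rw [hprodeq, Complex.ofReal_re]
  have hw := weier Finset.univ (fun i => (dotProduct (star (α i)) ((ρ i).mulVec (α i))).re)
    (fun i _ => hre0 i) (fun i _ => (hQ i).2)
  have hsum : ∑ i : Fin n, (1 - (dotProduct (star (α i)) ((ρ i).mulVec (α i))).re)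
      ≤ ∑ _i : Fin n, 6 * ν :=
    Finset.sum_le_sum fun i _ => by linarith [(hQ i).1]
  rw [Finset.sum_const, Finset.card_univ, Fintype.card_fin, nsmul_eq_mul] at hsum
  have : (n : ℝ) * (6 * ν) = 6 * n * ν := by ring
  rw [this] at hsum
  linarith [hw, hsum]
end
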